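/- Let G be a topological group and X a discrete G-set such that G embeds in Sym(X) via the action, and suppose K ≤ G is a subgroup whose closure in Sym(X) is compact, F = {f₁,…,f_k} ⊆ G is finite, g ∈ G, and K₀ := ⋂{hKh⁻¹ : h ∈ ⟨f₁,…,f_k,g⟩} has finite index in K. If G is locally finite, then K has finite index in K₁ := ⟨f₁,…,f_k, g, K⟩. -/

import Mathlib

open Pointwise

/-- in a locally finite group `G` acting faithfully on a set `X`,
if `K₀ = ⋂ {hKh⁻¹ : h ∈ ⟨f₁,…,f_k,g⟩}` has finite index in `K`, then `K` has
finite index in `K₁ = ⟨f₁,…,f_k,g,K⟩`. -/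
theorem stmt19 {G X : Type*} [Group G] [TopologicalSpace G] [IsTopologicalGroup G]
    [MulAction G X] [FaithfulSMul G X]
    (hlf : ∀ S : Set G, S.Finite → ((Subgroup.closure S : Subgroup G) : Set G).Finite)
    (K : Subgroup G) (hKcomp : IsCompact (closure (K : Set G)))
    (k : ℕ) (f : Fin k → G) (g : G)
    (K₀ : Subgroup G)
    (hK₀ : K₀ = ⨅ h ∈ ((Subgroup.closure (Set.range f ∪ {g}) : Subgroup G) : Set G),
      MulAut.conj h • K)
    (hfin : K₀.relIndex K ≠ 0) :
    K.relIndex (K ⊔ Subgroup.closure (Set.range f ∪ {g})) ≠ 0 := by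
  classical
  set H : Subgroup G := Subgroup.closure (Set.range f ∪ {g}) with hH
  -- membership criterion for K₀
  have hK₀mem : ∀ x : G, x ∈ K₀ ↔ ∀ h ∈ H, h⁻¹ * x * h ∈ K := by
    intro x
    rw [hK₀]
    simp only [Subgroup.mem_iInf, Subgroup.mem_pointwise_smul_iff_inv_smul_mem]
    constructor
    · intro hx h hh
      have := hx h hh
      simpa [MulAut.smul_def, mul_assoc] using this
    · intro hx h hh
      have := hx h hh
      simpa [MulAut.smul_def, mul_assoc] using this
  -- K₀ ≤ K
  have hK₀K : K₀ ≤ K := by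
    intro x hx
    have := (hK₀mem x).mp hx 1 (one_mem H)
    simpa using this
  -- H normalizes K₀
  have hnorm : ∀ h ∈ H, ∀ z ∈ K₀, h * z * h⁻¹ ∈ K₀ := by
    intro h hh z hz
    rw [hK₀mem]
    intro h' hh'
    have := (hK₀mem z).mp hz (h⁻¹ * h') (mul_mem (inv_mem hh) hh')
    simpa [mul_assoc] using this
  -- finite quotient K / K₀
  have hfq : Finite (K ⧸ K₀.subgroupOf K) := by
    have : Nat.card (K ⧸ K₀.subgroupOf K) ≠ 0 := hfin
    exact (Nat.card_ne_zero.mp this).2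
  -- coset representatives
  set T : Set G := Set.range (fun q : K ⧸ K₀.subgroupOf K => ((Quotient.out q : K) : G))
    with hT
  have hTK : T ⊆ (K : Set G) := by
    rintro _ ⟨q, rfl⟩; exact (Quotient.out q).2
  have hTfin : T.Finite := Set.finite_range _
  have hrep : ∀ x ∈ K, ∃ t ∈ T, ∃ z ∈ K₀, x = t * z := by
    intro x hx
    set q : K ⧸ K₀.subgroupOf K := QuotientGroup.mk ⟨x, hx⟩ with hq
    refine ⟨(Quotient.out q : K), ⟨q, rfl⟩, ((Quotient.out q : K) : G)⁻¹ * x, ?_, by group⟩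
    have hout : QuotientGroup.mk (Quotient.out q) = q := QuotientGroup.out_eq' q
    rw [hq] at hout
    have : (Quotient.out q : K)⁻¹ * ⟨x, hx⟩ ∈ K₀.subgroupOf K :=
      QuotientGroup.eq.mp hout
    simpa [Subgroup.mem_subgroupOf] using this
  -- the finite group F
  set S : Set G := (Set.range f ∪ {g}) ∪ T with hS
  have hSfin : S.Finite := ((Set.finite_range f).union (Set.finite_singleton g)).union hTfin
  set F : Subgroup G := Subgroup.closure S with hF
  have hFfin : ((F : Subgroup G) : Set G).Finite := hlf S hSfin
  have hHF : H ≤ F := Subgroup.closure_mono Set.subset_union_left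
  have hTF : T ⊆ (F : Set G) := fun t ht => Subgroup.subset_closure (Set.mem_union_right _ ht)
  have hFL : F ≤ K ⊔ H := by
    rw [hF]
    apply Subgroup.closure_le _ |>.mpr
    rintro x (hx | hx)
    · exact SetLike.le_def.mp le_sup_right (Subgroup.subset_closure hx)
    · exact SetLike.le_def.mp le_sup_left (hTK hx)
  -- key swap lemma: K₀ · F ⊆ F · K₀
  have hswap : ∀ y ∈ F, ∀ z ∈ K₀, ∃ y' ∈ F, ∃ z' ∈ K₀, z * y = y' * z' := by
    have main : ∀ y ∈ F,
        (∀ z ∈ K₀, ∃ y' ∈ F, ∃ z' ∈ K₀, z * y = y' * z') ∧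
        (∀ z ∈ K₀, ∃ y' ∈ F, ∃ z' ∈ K₀, z * y⁻¹ = y' * z') := by
      intro y hy
      induction hy using Subgroup.closure_induction with
      | mem s hs =>
        rcases hs with hs | hs
        · -- s ∈ range f ∪ {g} ⊆ H
          have hsH : s ∈ H := Subgroup.subset_closure hs
          have hsF : s ∈ F := hHF hsH
          constructor
          · intro z hz
            refine ⟨s, hsF, s⁻¹ * z * s, ?_, by group⟩
            have := hnorm s⁻¹ (inv_mem hsH) z hz
            simpa using this
          · intro z hz
            refine ⟨s⁻¹, inv_mem hsF, s * z * s⁻¹, hnorm s hsH z hz, by group⟩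
        · -- s ∈ T ⊆ K
          have hsK : s ∈ K := hTK hs
          constructor
          · intro z hz
            obtain ⟨t, ht, z', hz', heq⟩ := hrep (z * s) (mul_mem (hK₀K hz) hsK)
            exact ⟨t, hTF ht, z', hz', heq⟩
          · intro z hz
            obtain ⟨t, ht, z', hz', heq⟩ := hrep (z * s⁻¹) (mul_mem (hK₀K hz) (inv_mem hsK))
            exact ⟨t, hTF ht, z', hz', heq⟩
      | one =>
        exact ⟨fun z hz => ⟨1, one_mem F, z, hz, by group⟩,
               fun z hz => ⟨1, one_mem F, z, hz, by group⟩⟩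
      | mul a b ha hb iha ihb =>
        constructor
        · intro z hz
          obtain ⟨y₁, hy₁, z₁, hz₁, he₁⟩ := iha.1 z hz
          obtain ⟨y₂, hy₂, z₂, hz₂, he₂⟩ := ihb.1 z₁ hz₁
          exact ⟨y₁ * y₂, mul_mem hy₁ hy₂, z₂, hz₂, by
            rw [← mul_assoc, he₁, mul_assoc, he₂, mul_assoc]⟩
        · intro z hz
          obtain ⟨y₁, hy₁, z₁, hz₁, he₁⟩ := ihb.2 z hz
          obtain ⟨y₂, hy₂, z₂, hz₂, he₂⟩ := iha.2 z₁ hz₁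
          refine ⟨y₁ * y₂, mul_mem hy₁ hy₂, z₂, hz₂, by
            rw [mul_inv_rev, ← mul_assoc, he₁, mul_assoc, he₂, mul_assoc]⟩
      | inv a ha iha =>
        exact ⟨iha.2, by simpa using iha.1⟩
    intro y hy z hz
    exact (main y hy).1 z hz
  -- decomposition of K ⊔ H
  have hdec : ∀ x ∈ K ⊔ H, ∃ y ∈ F, ∃ z ∈ K₀, x = y * z := by
    have hsup : K ⊔ H = Subgroup.closure ((K : Set G) ∪ (H : Set G)) := by
      rw [Subgroup.closure_union, Subgroup.closure_eq, Subgroup.closure_eq]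
    intro x hx
    rw [hsup] at hx
    induction hx using Subgroup.closure_induction with
    | mem s hs =>
      rcases hs with hs | hs
      · obtain ⟨t, ht, z, hz, heq⟩ := hrep s hs
        exact ⟨t, hTF ht, z, hz, heq⟩
      · exact ⟨s, hHF hs, 1, one_mem K₀, by group⟩
    | one => exact ⟨1, one_mem F, 1, one_mem K₀, by group⟩
    | mul a b ha hb iha ihb =>
      obtain ⟨y₁, hy₁, z₁, hz₁, he₁⟩ := iha
      obtain ⟨y₂, hy₂, z₂, hz₂, he₂⟩ := ihb
      obtain ⟨y', hy', z', hz', he'⟩ := hswap y₂ hy₂ z₁ hz₁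
      exact ⟨y₁ * y', mul_mem hy₁ hy', z' * z₂, mul_mem hz' hz₂, by
        rw [he₁, he₂, mul_assoc y₁, ← mul_assoc z₁, he']; simp [mul_assoc]⟩
    | inv a ha iha =>
      obtain ⟨y₁, hy₁, z₁, hz₁, he₁⟩ := iha
      obtain ⟨y', hy', z', hz', he'⟩ := hswap y₁⁻¹ (inv_mem hy₁) z₁⁻¹ (inv_mem hz₁)
      exact ⟨y', hy', z', hz', by rw [he₁, mul_inv_rev, he']⟩
  -- conclude finiteness of the index
  set L : Subgroup G := K ⊔ H with hL
  have : Finite (L ⧸ K.subgroupOf L) := by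
    have : Finite (F : Set G) := hFfin.to_subtype
    refine Finite.of_surjective
      (fun y : (F : Set G) => QuotientGroup.mk (⟨(y : G), hFL y.2⟩ : L)) ?_
    rintro q
    obtain ⟨x, rfl⟩ := QuotientGroup.mk_surjective q
    obtain ⟨y, hy, z, hz, heq⟩ := hdec (x : G) x.2
    refine ⟨⟨y, hy⟩, ?_⟩
    apply (QuotientGroup.eq).mpr
    have : (⟨y, hFL hy⟩ : L)⁻¹ * x = ⟨y⁻¹ * x, mul_mem (inv_mem (hFL hy)) x.2⟩ := rfl
    rw [Subgroup.mem_subgroupOf]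
    show ((⟨y, hFL hy⟩ : L)⁻¹ * x : G) ∈ K
    have : (y : G)⁻¹ * x = z := by rw [heq]; group
    simpa [this] using hK₀K hz
  have : Nat.card (L ⧸ K.subgroupOf L) ≠ 0 :=
    Nat.card_ne_zero.mpr ⟨⟨QuotientGroup.mk 1⟩, this⟩
  exact this
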